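/- For any prime p and any positive integers n and k, 5·F_{n·p^{2k}} ≡ 5·F_{n·p^{2(k−1)}} (mod p^k). -/

import Mathlib

noncomputable section FibAuxSection

namespace FibAux

open Polynomial AdjoinRoot

abbrev g : ℤ[X] := X ^ 2 - X - 1

lemma hgmonic : g.Monic := by
  have h : (g : ℤ[X]) = X ^ 2 - (X + 1) := by ring
  rw [h]
  apply monic_X_pow_sub
  have h1 : (X + 1 : ℤ[X]).degree ≤ 1 := by
    apply (degree_add_le _ _).trans
    simp
  exact lt_of_le_of_lt h1 (by norm_num)

lemma degree_g : (g : ℤ[X]).degree = 2 := by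
  have h : (g : ℤ[X]) = X ^ 2 - (X + 1) := by ring
  rw [h]
  rw [degree_sub_eq_left_of_degree_lt] <;> rw [degree_X_pow] <;>
    [rfl; exact lt_of_le_of_lt (degree_add_le _ _) (by simp)]

abbrev O := AdjoinRoot g

def α : O := root g

lemma hα : α ^ 2 = α + 1 := by
  have h : (mk g) g = 0 := mk_self
  have h2 : (mk g) g = α ^ 2 - α - 1 := by
    simp [g, map_sub, map_pow, mk_X, α]
  rw [h2] at h
  linear_combination h

/-- coefficient extraction -/
def coord (i : ℕ) : O →ₗ[ℤ] ℤ :=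
  (Polynomial.lcoeff ℤ i).comp (modByMonicHom hgmonic)

lemma coord_mk (i : ℕ) (f : ℤ[X]) (hf : f.degree < 2) :
    coord i (mk g f) = f.coeff i := by
  rw [coord, LinearMap.comp_apply, modByMonicHom_mk,
    (modByMonic_eq_self_iff hgmonic).mpr (by rw [degree_g]; exact hf)]
  rfl

lemma coord_α (i : ℕ) : coord i α = if 1 = i then 1 else 0 := by
  have : α = mk g X := (mk_X).symm
  rw [this, coord_mk i X (by rw [degree_X]; norm_num), coeff_X]

lemma coord_int (i : ℕ) (m : ℤ) : coord i ((m : O)) = if i = 0 then m else 0 := by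
  have h1 : ((m : O)) = mk g (C m) := by
    rw [mk_C]
    simp
  rw [h1, coord_mk i (C m) (lt_of_le_of_lt (degree_C_le) (by norm_num)), coeff_C]

lemma coord_int_mul (i : ℕ) (m : ℤ) (y : O) : coord i ((m : O) * y) = m * coord i y := by
  rw [← zsmul_eq_mul, map_zsmul, smul_eq_mul]

lemma int_dvd_of_dvd {c : ℤ} {z : O} (h : ((c : ℤ) : O) = z) {d : ℤ} (hd : ((d : ℤ) : O) ∣ z) :
    d ∣ c := by
  obtain ⟨y, hy⟩ := hd
  have := congrArg (coord 0) (h.trans hy)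
  rw [coord_int, coord_int_mul] at this
  simp at this
  exact ⟨coord 0 y, this⟩

/-- α^(m+1) = fib(m+1) α + fib m, for any root of x² = x+1 -/
lemma pow_fib_gen (x : O) (hx : x ^ 2 = x + 1) (m : ℕ) :
    x ^ (m + 1) = (Nat.fib (m + 1) : O) * x + (Nat.fib m : O) := by
  induction m with
  | zero => simp
  | succ m ih =>
    have h1 : x ^ (m + 2) = x ^ (m + 1) * x := by ring
    rw [h1, ih, Nat.fib_add_two]
    push_cast
    linear_combination (Nat.fib (m + 1) : O) * hx

lemma pow_fib (m : ℕ) : α ^ (m + 1) = (Nat.fib (m + 1) : O) * α + (Nat.fib m : O) :=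
  pow_fib_gen α hα m

/-- (1+h)^n = 1 + n h + h² w -/
lemma one_add_pow (h : O) (n : ℕ) : ∃ w : O, (1 + h) ^ n = 1 + (n : O) * h + h ^ 2 * w := by
  induction n with
  | zero => exact ⟨0, by simp⟩
  | succ n ih =>
    obtain ⟨w, hw⟩ := ih
    refine ⟨w + (n : O) + h * w, ?_⟩
    have : (1 + h) ^ (n + 1) = (1 + h) ^ n * (1 + h) := by ring
    rw [this, hw]
    push_cast
    ring

/-- lifting step for p ≠ 5 style: uses only that q ≥ 0 along with structure -/
lemma lift_step (q : ℕ) (c : ℕ) (hc : 1 ≤ c) (y : O)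
    (h : ((q : O)) ^ c ∣ y - 1) : ((q : O)) ^ (c + 1) ∣ y ^ q - 1 := by
  obtain ⟨t, ht⟩ := h
  have hy : y = 1 + (q : O) ^ c * t := by linear_combination ht
  obtain ⟨w, hw⟩ := one_add_pow ((q : O) ^ c * t) q
  rw [hy, hw]
  obtain ⟨c', hc'⟩ := Nat.exists_eq_add_of_le hc
  refine ⟨t + (q:O) ^ (c-1) * (t^2 * w), ?_⟩
  subst hc'
  simp only [Nat.add_sub_cancel_left] at *
  ring_nf

def ε : O := 2 * α - 1

lemma eps_sq : ε ^ 2 = 5 := by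
  rw [ε]; linear_combination 4 * hα

lemma lift_step5 (c : ℕ) (hc : 1 ≤ c) (y : O)
    (h : ε ^ c ∣ y - 1) : ε ^ (c + 1) ∣ y ^ 5 - 1 := by
  obtain ⟨t, ht⟩ := h
  have hy : y = 1 + ε ^ c * t := by linear_combination ht
  obtain ⟨w, hw⟩ := one_add_pow (ε ^ c * t) 5
  rw [hy, hw]
  obtain ⟨c', rfl⟩ := Nat.exists_eq_add_of_le hc
  refine ⟨ε * t + ε ^ c' * (t ^ 2 * w), ?_⟩
  push_cast
  ring_nf
  linear_combination (-(t * ε ^ (1 + c'))) * eps_sq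

lemma cassini (m : ℕ) :
    (Nat.fib m : ℤ) * Nat.fib (m + 2) - (Nat.fib (m + 1) : ℤ) ^ 2 = (-1) ^ (m + 1) := by
  induction m with
  | zero => simp
  | succ m ih =>
    have h3 : Nat.fib (m + 1 + 2) = Nat.fib (m + 1) + Nat.fib (m + 1 + 1) := Nat.fib_add_two
    have h2 : Nat.fib (m + 2) = Nat.fib m + Nat.fib (m + 1) := Nat.fib_add_two
    rw [show m + 1 + 1 = m + 2 from rfl, pow_succ]
    push_cast [h3, h2]
    push_cast [h2] at ih ⊢
    linear_combination -ih

lemma int_fermat (p : ℕ) (hp : p.Prime) (u : ℤ) : ∃ a : ℤ, u ^ p = u + p * a := by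
  haveI : Fact p.Prime := ⟨hp⟩
  have h : ((u ^ p - u : ℤ) : ZMod p) = 0 := by
    push_cast
    rw [ZMod.pow_card]
    ring
  obtain ⟨a, ha⟩ := (ZMod.intCast_zmod_eq_zero_iff_dvd _ _).mp h
  exact ⟨a, by linarith⟩

lemma base2 : ((2 : ℕ) : O) ∣ α ^ (2 ^ 2) - α := by
  refine ⟨α + 1, ?_⟩
  push_cast
  linear_combination (α ^ 2 + α + 2) * hα

lemma fib24 : Nat.fib 24 = 46368 := by decide
lemma fib23 : Nat.fib 23 = 28657 := by decide

lemma base5 : ε ∣ α ^ 24 - 1 := by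
  refine ⟨20736 * α + 12816, ?_⟩
  have h24 : α ^ 24 = (Nat.fib 24 : O) * α + (Nat.fib 23 : O) := pow_fib 23
  rw [h24, fib24, fib23, ε]
  push_cast
  linear_combination (-41472 : O) * hα

lemma base_odd (p : ℕ) (hp : p.Prime) (h2 : p ≠ 2) (h5 : p ≠ 5) :
    ((p : ℕ) : O) ∣ 5 * (α ^ (p ^ 2) - α) := by
  set u : ℤ := (Nat.fib p : ℤ) with hu
  set v : ℤ := (Nat.fib (p - 1) : ℤ) with hv
  have hp1 : p - 1 + 1 = p := Nat.succ_pred_eq_of_pos hp.pos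
  have hαp : α ^ p = (u : O) * α + (v : O) := by
    have h := pow_fib (p - 1)
    rw [hp1] at h
    rw [h, hu, hv]
    push_cast
    ring
  have h1α : (1 - α) ^ 2 = (1 - α) + 1 := by linear_combination hα
  have hβp : (1 - α) ^ p = (u : O) * (1 - α) + (v : O) := by
    have h := pow_fib_gen (1 - α) h1α (p - 1)
    rw [hp1] at h
    rw [h, hu, hv]
    push_cast
    ring
  obtain ⟨w, hw⟩ : ∃ w : O, (α + (1 - α)) ^ p = α ^ p + (1 - α) ^ p + (p : O) * w := by
    obtain ⟨w, hw⟩ := exists_add_pow_prime_eq hp α (1 - α)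
    exact ⟨α * (1 - α) * w, by rw [hw]; ring⟩
  have htr : ((u + 2 * v - 1 : ℤ) : O) = ((p : ℕ) : O) * (-w) := by
    push_cast
    linear_combination (-1 : O) * hw - hαp - hβp
  obtain ⟨a, ha⟩ : ∃ a : ℤ, u + 2 * v - 1 = (p : ℤ) * a := by
    have hd : (((p : ℤ)) : O) ∣ ((p : ℕ) : O) * (-w) := ⟨-w, by push_cast; ring⟩
    obtain ⟨a, ha⟩ := int_dvd_of_dvd htr hd
    exact ⟨a, ha⟩
  have hB : u * v + v ^ 2 - u ^ 2 = -1 := by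
    have hca := cassini (p - 1)
    have hp2' : p - 1 + 2 = p + 1 := by omega
    rw [hp1, hp2'] at hca
    have hfib : Nat.fib (p + 1) = Nat.fib (p - 1) + Nat.fib p := by
      rw [← hp2', Nat.fib_add_two, hp1]
    have hodd : (-1 : ℤ) ^ p = -1 := Odd.neg_one_pow (hp.odd_of_ne_two h2)
    rw [hfib, hodd] at hca
    push_cast at hca
    rw [hu, hv]
    push_cast
    linear_combination hca
  have h5u : 5 * (u ^ 2 - 1) = ((p : ℤ) * a) * (u + 2 * v + 1) := by
    linear_combination (u + 2 * v + 1) * ha - 4 * hB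
  have h5v : 5 * (v * (u + 1)) = ((p : ℤ) * a) * (2 * u - v + 2) := by
    linear_combination (2 * u - v + 2) * ha + 2 * hB
  obtain ⟨a₁, ha₁⟩ := int_fermat p hp u
  obtain ⟨a₂, ha₂⟩ := int_fermat p hp v
  obtain ⟨w₂, hw₂⟩ : ∃ w₂ : O, ((u : O) * α + (v : O)) ^ p
      = ((u : O) * α) ^ p + (v : O) ^ p + (p : O) * w₂ := by
    obtain ⟨w₂, hw₂⟩ := exists_add_pow_prime_eq hp ((u : O) * α) ((v : O))
    exact ⟨(u : O) * α * (v : O) * w₂, by rw [hw₂]; ring⟩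
  have hpp : α ^ (p ^ 2) = ((u : O) * α + (v : O)) ^ p := by
    rw [pow_two, pow_mul, hαp]
  have hu' : ((u : O)) ^ p = (u : O) + ((p : ℕ) : O) * ((a₁ : ℤ) : O) := by
    have := congrArg (fun z : ℤ => (z : O)) ha₁
    push_cast at this ⊢
    linear_combination this
  have hv' : ((v : O)) ^ p = (v : O) + ((p : ℕ) : O) * ((a₂ : ℤ) : O) := by
    have := congrArg (fun z : ℤ => (z : O)) ha₂
    push_cast at this ⊢
    linear_combination this
  have H5u : ((5 * (u ^ 2 - 1) : ℤ) : O) = (((p : ℤ) * a * (u + 2 * v + 1) : ℤ) : O) :=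
    congrArg _ h5u
  have H5v : ((5 * (v * (u + 1)) : ℤ) : O) = (((p : ℤ) * a * (2 * u - v + 2) : ℤ) : O) :=
    congrArg _ h5v
  push_cast at H5u H5v
  refine ⟨((a : ℤ) : O) * (((u : O) + 2 * (v : O) + 1) * α + (2 * (u : O) - (v : O) + 2))
      + 5 * (((a₁ : ℤ) : O) * ((u : O) * α + (v : O)) + ((a₂ : ℤ) : O) + w₂), ?_⟩
  rw [hpp, hw₂, mul_pow, hu', hv', hαp]
  linear_combination α * H5u + H5v

lemma cancel5 (p : ℕ) (hp : p.Prime) (h5 : p ≠ 5) (x : O) (j : ℕ)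
    (h : ((p : ℕ) : O) ^ j ∣ 5 * x) : ((p : ℕ) : O) ^ j ∣ x := by
  have hcop : IsCoprime (5 : ℤ) ((p : ℤ)) := by
    rw [Int.isCoprime_iff_gcd_eq_one]
    have : Nat.Coprime 5 p := (Nat.coprime_primes (by norm_num) hp).mpr (fun hq => h5 hq.symm)
    simpa [Int.gcd] using this
  obtain ⟨m, l, hml⟩ := hcop.pow_right (n := j)
  obtain ⟨y, hy⟩ := h
  refine ⟨(m : O) * y + (l : O) * x, ?_⟩
  have hml' : ((m * 5 + l * (p : ℤ) ^ j : ℤ) : O) = 1 := by rw [hml]; push_cast; ring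
  push_cast at hml'
  calc x = (m : O) * (5 * x) + ((l : O) * x) * ((p:ℕ) : O) ^ j -
        ((m : O) * 5 + (l : O) * ((p:ℕ):O) ^ j - 1) * x := by ring
    _ = ((p : ℕ) : O) ^ j * ((m : O) * y + (l : O) * x) := by
        rw [hy]
        rw [show ((m : O) * 5 + (l : O) * ((p:ℕ):O) ^ j - 1) = 0 by
          linear_combination hml']
        ring

lemma base_ne5 (p : ℕ) (hp : p.Prime) (h5 : p ≠ 5) :
    ((p : ℕ) : O) ∣ α ^ (p ^ 2 - 1) - 1 := by
  have hαunit : α * (α - 1) = 1 := by linear_combination hα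
  have hdvd : ((p : ℕ) : O) ∣ 5 * (α ^ (p ^ 2) - α) := by
    by_cases h2 : p = 2
    · subst h2
      exact Dvd.dvd.mul_left base2 5
    · exact base_odd p hp h2 h5
  have hdvd' : ((p : ℕ) : O) ∣ α ^ (p ^ 2) - α := by
    have := cancel5 p hp h5 (α ^ (p ^ 2) - α) 1 (by simpa using hdvd)
    simpa using this
  have hq : p ^ 2 - 1 + 1 = p ^ 2 := Nat.succ_pred_eq_of_pos (pow_pos hp.pos 2)
  have hpow : α ^ (p ^ 2) = α ^ (p ^ 2 - 1) * α := by
    conv_lhs => rw [← hq]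
    rw [pow_succ]
  have key : α ^ (p ^ 2 - 1) - 1 = (α - 1) * (α ^ (p ^ 2) - α) := by
    rw [hpow]
    linear_combination (1 - α ^ (p ^ 2 - 1)) * hαunit
  rw [key]
  exact Dvd.dvd.mul_left hdvd' _

lemma claim_ne5 (p : ℕ) (hp : p.Prime) (h5 : p ≠ 5) (j : ℕ) :
    ((p : ℕ) : O) ^ (1 + j) ∣ α ^ ((p ^ 2 - 1) * p ^ j) - 1 := by
  induction j with
  | zero => simpa using base_ne5 p hp h5
  | succ j ih =>
    have he : α ^ ((p ^ 2 - 1) * p ^ (j + 1)) = (α ^ ((p ^ 2 - 1) * p ^ j)) ^ p := by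
      rw [← pow_mul]
      congr 1
      rw [pow_succ p j, ← mul_assoc]
    rw [he, show 1 + (j + 1) = (1 + j) + 1 by omega]
    exact lift_step p (1 + j) (by omega) _ ih

lemma claim_5 (j : ℕ) : ε ^ (1 + j) ∣ α ^ (24 * 5 ^ j) - 1 := by
  induction j with
  | zero => simpa using base5
  | succ j ih =>
    have he : α ^ (24 * 5 ^ (j + 1)) = (α ^ (24 * 5 ^ j)) ^ 5 := by
      rw [← pow_mul]
      congr 1
      rw [pow_succ 5 j, ← mul_assoc]
    rw [he, show 1 + (j + 1) = (1 + j) + 1 by omega]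
    exact lift_step5 (1 + j) (by omega) _ ih

lemma main_dvd (p : ℕ) (hp : p.Prime) (k : ℕ) (hk : 0 < k) :
    ((p : ℕ) : O) ^ k ∣ 5 * (α ^ ((p ^ 2 - 1) * p ^ (2 * (k - 1))) - 1) := by
  by_cases h5 : p = 5
  · subst h5
    obtain ⟨t, ht⟩ := claim_5 (2 * (k - 1))
    refine ⟨ε * t, ?_⟩
    have hke : 2 + (1 + 2 * (k - 1)) = 2 * k + 1 := by omega
    have h55 : ((5 : ℕ) : O) = ε ^ 2 := by push_cast; rw [eps_sq]
    rw [show (5 ^ 2 - 1) = 24 by norm_num, h55, ht, ← eps_sq]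
    calc ε ^ 2 * (ε ^ (1 + 2 * (k - 1)) * t) = ε ^ (2 + (1 + 2 * (k - 1))) * t := by
          rw [pow_add]; ring
      _ = ε ^ (2 * k + 1) * t := by rw [hke]
      _ = ε ^ (2 * k) * (ε * t) := by rw [pow_succ]; ring
      _ = (ε ^ 2) ^ k * (ε * t) := by rw [← pow_mul]
  · obtain ⟨t, ht⟩ := claim_ne5 p hp h5 (2 * (k - 1))
    have hle : k ≤ 1 + 2 * (k - 1) := by omega
    exact Dvd.dvd.mul_left ((pow_dvd_pow _ hle).trans ⟨t, ht⟩) 5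

end FibAux

theorem five_fib_mul_prime_even_power_cong (p : ℕ) (hp : p.Prime) (n k : ℕ)
    (hn : 0 < n) (hk : 0 < k) :
    5 * Nat.fib (n * p ^ (2 * k)) ≡ 5 * Nat.fib (n * p ^ (2 * (k - 1))) [MOD p ^ k] := by
  open FibAux in
  set M := n * p ^ (2 * k) with hM
  set N := n * p ^ (2 * (k - 1)) with hN
  set e := (p ^ 2 - 1) * p ^ (2 * (k - 1)) with he
  have hppos := hp.pos
  have hMN : M = N + e * n := by
    have h2k : 2 * k = 2 * (k - 1) + 2 := by omega
    obtain ⟨r, hr⟩ : ∃ r, p ^ 2 = r + 1 := ⟨p ^ 2 - 1, by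
      have : 0 < p ^ 2 := pow_pos hppos 2
      omega⟩
    rw [hM, hN, he, h2k, pow_add, hr]
    simp only [Nat.add_sub_cancel]
    ring
  have key : ((p : ℕ) : FibAux.O) ^ k ∣ 5 * (FibAux.α ^ M - FibAux.α ^ N) := by
    obtain ⟨T, hT⟩ := FibAux.main_dvd p hp k hk
    obtain ⟨S, hS⟩ := sub_dvd_pow_sub_pow (FibAux.α ^ e) 1 n
    rw [one_pow] at hS
    refine ⟨FibAux.α ^ N * (T * S), ?_⟩
    have h1 : FibAux.α ^ M = FibAux.α ^ N * (FibAux.α ^ e) ^ n := by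
      rw [hMN, pow_add, pow_mul FibAux.α e n]
    rw [h1]
    linear_combination (FibAux.α ^ N * 5) * hS + (FibAux.α ^ N * S) * hT
  have hMpos : 0 < M := by positivity
  have hNpos : 0 < N := by positivity
  have hM1 : M - 1 + 1 = M := Nat.succ_pred_eq_of_pos hMpos
  have hN1 : N - 1 + 1 = N := Nat.succ_pred_eq_of_pos hNpos
  have hαM : FibAux.α ^ M
      = (Nat.fib M : FibAux.O) * FibAux.α + (Nat.fib (M - 1) : FibAux.O) := by
    conv_lhs => rw [← hM1]
    rw [FibAux.pow_fib (M - 1), hM1]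
  have hαN : FibAux.α ^ N
      = (Nat.fib N : FibAux.O) * FibAux.α + (Nat.fib (N - 1) : FibAux.O) := by
    conv_lhs => rw [← hN1]
    rw [FibAux.pow_fib (N - 1), hN1]
  have hx : 5 * (FibAux.α ^ M - FibAux.α ^ N)
      = ((5 * Nat.fib M - 5 * Nat.fib N : ℤ) : FibAux.O) * FibAux.α
        + ((5 * Nat.fib (M - 1) - 5 * Nat.fib (N - 1) : ℤ) : FibAux.O) := by
    rw [hαM, hαN]
    push_cast
    ring
  have hdvd : ((p : ℤ)) ^ k ∣ (5 * Nat.fib M - 5 * Nat.fib N : ℤ) := by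
    obtain ⟨y, hy⟩ := key
    have h2 : ((((p : ℤ) ^ k : ℤ)) : FibAux.O) ∣ 5 * (FibAux.α ^ M - FibAux.α ^ N) :=
      ⟨y, by rw [hy]; push_cast; ring⟩
    obtain ⟨z, hz⟩ := h2
    have hcd := congrArg (FibAux.coord 1) (hx.symm.trans hz)
    rw [FibAux.coord_int_mul, map_add, FibAux.coord_int_mul, FibAux.coord_α,
      FibAux.coord_int] at hcd
    norm_num at hcd
    exact ⟨_, hcd⟩
  have goal_dvd : ((p ^ k : ℕ) : ℤ) ∣ (↑(5 * Nat.fib N) : ℤ) - (↑(5 * Nat.fib M) : ℤ) := by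
    push_cast
    have h3 : (5 * (Nat.fib N : ℤ) - 5 * (Nat.fib M : ℤ))
        = -(5 * Nat.fib M - 5 * Nat.fib N : ℤ) := by ring
    rw [h3]
    exact dvd_neg.mpr hdvd
  exact (Nat.modEq_iff_dvd).mpr goal_dvd
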